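/- Let P ∈ ℝ[x_1,...,x_n] be a polynomial of total degree m, and let f : {1,...,n} → ℕ⁺ satisfy ∑_i f(i) = m + n. Let NZ(P) be the set of points (z_1,...,z_n) with integer coordinates 0 ≤ z_i ≤ f(i)−1 at which P is nonzero. If ∑_{(z_1,...,z_n) ∈ NZ(P)} (-1)^{z_1+⋯+z_n} ∏_{i=1}^n C(f(i)−1, z_i) · P(z_1,...,z_n) ≠ 0, then for all sets S_1,...,S_n ⊆ ℝ with |S_i| ≥ f(i), there exists (s_1,...,s_n) ∈ S_1 × ⋯ × S_n with P(s_1,...,s_n) ≠ 0. -/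

import Mathlib

open MvPolynomial Finset


lemma lagrange_coeff_top (S : Finset ℝ) (a : ℕ) (ha : a < S.card) :
    ∑ x ∈ S, x ^ a * ∏ t ∈ S.erase x, (x - t)⁻¹
      = if a = S.card - 1 then 1 else 0 := by
  have hvs : Set.InjOn (id : ℝ → ℝ) S := Function.injective_id.injOn
  have hdeg : (Polynomial.X ^ a : Polynomial ℝ).degree < S.card := by
    simpa [Polynomial.degree_X_pow] using (by exact_mod_cast ha : (a : WithBot ℕ) < (S.card : WithBot ℕ))
  have h := Lagrange.eq_interpolate (f := (Polynomial.X ^ a : Polynomial ℝ)) hvs hdeg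
  have h2 := congrArg (fun p => Polynomial.coeff p (S.card - 1)) h
  simp only [Polynomial.coeff_X_pow, Lagrange.interpolate_apply] at h2
  rw [Polynomial.finset_sum_coeff] at h2
  have hb : ∀ x ∈ S, (Polynomial.C (Polynomial.eval (id x) (Polynomial.X ^ a : Polynomial ℝ)) * Lagrange.basis S id x).coeff (S.card - 1)
      = x ^ a * ∏ t ∈ S.erase x, (x - t)⁻¹ := by
    intro x hx
    rw [Polynomial.coeff_C_mul]
    have hnd : (Lagrange.basis S id x).natDegree = S.card - 1 := Lagrange.natDegree_basis hvs hx
    have hlc : (Lagrange.basis S id x).leadingCoeff = ∏ t ∈ S.erase x, (x - t)⁻¹ := by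
      rw [Lagrange.basis, Polynomial.leadingCoeff_prod]
      refine Finset.prod_congr rfl fun t ht => ?_
      have hxt : (x : ℝ) ≠ t := (Finset.ne_of_mem_erase ht).symm
      rw [Lagrange.basisDivisor, Polynomial.leadingCoeff_mul, Polynomial.leadingCoeff_C,
        Polynomial.leadingCoeff_X_sub_C, mul_one]; rfl
    have : (Lagrange.basis S id x).coeff (S.card - 1) = ∏ t ∈ S.erase x, (x - t)⁻¹ := by
      rw [← hnd, Polynomial.coeff_natDegree, hlc]
    rw [this]
    simp
  rw [Finset.sum_congr rfl hb] at h2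
  rw [← h2]
  simp [eq_comm]

lemma grid_identity (n : ℕ) (P : MvPolynomial (Fin n) ℝ) (S : Fin n → Finset ℝ)
    (hdeg : P.totalDegree ≤ ∑ i, ((S i).card - 1)) (hS : ∀ i, 1 ≤ (S i).card) :
    ∑ s ∈ Fintype.piFinset S,
        (∏ i, ∏ t ∈ (S i).erase (s i), (s i - t)⁻¹) * MvPolynomial.eval s P
      = MvPolynomial.coeff (Finsupp.equivFunOnFinite.symm fun i => (S i).card - 1) P := by
  set target : (Fin n →₀ ℕ) := Finsupp.equivFunOnFinite.symm fun i => (S i).card - 1 with htarget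
  have htargetapp : ∀ i, target i = (S i).card - 1 := fun i => rfl
  calc ∑ s ∈ Fintype.piFinset S,
        (∏ i, ∏ t ∈ (S i).erase (s i), (s i - t)⁻¹) * MvPolynomial.eval s P
      = ∑ s ∈ Fintype.piFinset S, ∑ d ∈ P.support,
          MvPolynomial.coeff d P * ∏ i, (s i ^ d i * ∏ t ∈ (S i).erase (s i), (s i - t)⁻¹) := by
        refine Finset.sum_congr rfl fun s _ => ?_
        rw [MvPolynomial.eval_eq', Finset.mul_sum]
        refine Finset.sum_congr rfl fun d _ => ?_
        rw [Finset.prod_mul_distrib]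
        ring
    _ = ∑ d ∈ P.support, MvPolynomial.coeff d P *
          ∏ i, ∑ x ∈ S i, x ^ d i * ∏ t ∈ (S i).erase x, (x - t)⁻¹ := by
        rw [Finset.sum_comm]
        refine Finset.sum_congr rfl fun d _ => ?_
        rw [← Finset.mul_sum, Finset.prod_univ_sum]
    _ = ∑ d ∈ P.support, (if d = target then MvPolynomial.coeff d P else 0) := by
        refine Finset.sum_congr rfl fun d hd => ?_
        have hd_sum : ∑ i, d i ≤ ∑ i, ((S i).card - 1) := by
          have h1 : (d.sum fun _ n => n) ≤ P.totalDegree := MvPolynomial.le_totalDegree hd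
          have h2 : (d.sum fun _ n => n) = ∑ i, d i := Finsupp.sum_fintype _ _ (fun _ => rfl)
          omega
        have key : (∏ i, ∑ x ∈ S i, x ^ d i * ∏ t ∈ (S i).erase x, (x - t)⁻¹)
            = if d = target then 1 else 0 := by
          by_cases hall : ∀ i, d i < (S i).card
          · rw [Finset.prod_congr rfl fun i _ => lagrange_coeff_top (S i) (d i) (hall i)]
            by_cases heq : ∀ i, d i = (S i).card - 1
            · have : d = target := by
                ext i; rw [heq i, htargetapp]
              rw [if_pos this, Finset.prod_congr rfl fun i _ => if_pos (heq i), Finset.prod_const_one]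
            · push_neg at heq
              obtain ⟨j, hj⟩ := heq
              have hdne : d ≠ target := fun h => hj (by rw [h, htargetapp])
              rw [if_neg hdne]
              exact Finset.prod_eq_zero (Finset.mem_univ j) (if_neg hj)
          · push_neg at hall
            obtain ⟨i₀, hi₀⟩ := hall
            have hdne : d ≠ target := by
              intro h
              have := htargetapp i₀
              rw [← h] at this
              have := hS i₀
              omega
            have hj : ∃ j, d j < (S j).card - 1 := by
              by_contra hc
              push_neg at hc
              have : ∑ i, ((S i).card - 1) < ∑ i, d i :=
                Finset.sum_lt_sum (fun i _ => hc i) ⟨i₀, Finset.mem_univ i₀, by have := hS i₀; omega⟩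
              omega
            obtain ⟨j, hjlt⟩ := hj
            rw [if_neg hdne]
            refine Finset.prod_eq_zero (Finset.mem_univ j) ?_
            rw [lagrange_coeff_top (S j) (d j) (by omega)]
            exact if_neg (by omega)
        rw [key]
        split <;> simp
    _ = MvPolynomial.coeff target P := by
        rw [Finset.sum_ite_eq' P.support target (fun d => MvPolynomial.coeff d P)]
        split
        · rfl
        · exact (MvPolynomial.notMem_support_iff.mp (by assumption)).symm

lemma prod_range_sub_cast (z : ℕ) : ∏ t ∈ range z, ((z : ℝ) - t) = (Nat.factorial z : ℝ) := by
  induction z with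
  | zero => simp
  | succ z ih =>
    rw [Finset.prod_range_succ']
    have h : ∀ t ∈ range z, (((z : ℕ) + 1 : ℝ) - ((t : ℕ) + 1 : ℝ)) = (z : ℝ) - t := by
      intro t _; ring
    push_cast
    rw [Finset.prod_congr rfl h]
    push_cast at ih
    rw [ih, Nat.factorial_succ]
    push_cast
    ring

lemma prod_erase_range_cast (k z : ℕ) (hz : z ≤ k) :
    ∏ t ∈ (range (k + 1)).erase z, ((z : ℝ) - t)
      = (-1) ^ (k - z) * (Nat.factorial z : ℝ) * (Nat.factorial (k - z) : ℝ) := by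
  have hsplit : (range (k + 1)).erase z = range z ∪ Ico (z + 1) (k + 1) := by
    ext t
    simp only [Finset.mem_erase, Finset.mem_range, Finset.mem_union, Finset.mem_Ico]
    omega
  have hdisj : Disjoint (range z) (Ico (z + 1) (k + 1)) := by
    rw [Finset.disjoint_left]
    intro a ha hb
    simp only [Finset.mem_range] at ha
    simp only [Finset.mem_Ico] at hb
    omega
  rw [hsplit, Finset.prod_union hdisj, prod_range_sub_cast]
  have h2 : ∏ t ∈ Ico (z + 1) (k + 1), ((z : ℝ) - t) = (-1) ^ (k - z) * (Nat.factorial (k - z) : ℝ) := by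
    rw [Finset.prod_Ico_eq_prod_range]
    have hn : k + 1 - (z + 1) = k - z := by omega
    rw [hn]
    have h : ∀ j ∈ range (k - z), ((z : ℝ) - ((z + 1 + j : ℕ) : ℝ)) = (-1) * ((j : ℝ) + 1) := by
      intro j _; push_cast; ring
    rw [Finset.prod_congr rfl h, Finset.prod_mul_distrib, Finset.prod_const, Finset.card_range]
    congr 1
    have := Finset.prod_range_add_one_eq_factorial (k - z)
    calc ∏ j ∈ range (k - z), ((j : ℝ) + 1) = ((∏ j ∈ range (k - z), (j + 1) : ℕ) : ℝ) := by
          push_cast; rfl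
      _ = ((k - z).factorial : ℝ) := by rw [this]
  rw [h2]; ring

lemma weight_eq (k z : ℕ) (hz : z ≤ k) :
    ∏ t ∈ (((range (k + 1)).image (Nat.cast : ℕ → ℝ)).erase ((z : ℕ) : ℝ)), (((z : ℕ) : ℝ) - t)⁻¹
      = (-1 : ℝ) ^ k * (-1) ^ z * (k.choose z) / (Nat.factorial k : ℝ) := by
  rw [← Finset.image_erase Nat.cast_injective,
    Finset.prod_image (fun a _ b _ h => Nat.cast_injective h), Finset.prod_inv_distrib,
    prod_erase_range_cast k z hz, Nat.cast_choose ℝ hz]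
  have h1 : ((-1 : ℝ)) ^ (k - z) = (-1) ^ k * (-1) ^ z := by
    have hk : k + z = (k - z) + 2 * z := by omega
    have : ((-1 : ℝ)) ^ (k + z) = (-1) ^ (k - z) := by
      rw [hk, pow_add, pow_mul]
      norm_num
    rw [← this, pow_add]
  rw [h1]
  have hz' : (Nat.factorial z : ℝ) ≠ 0 := by positivity
  have hkz' : (Nat.factorial (k - z) : ℝ) ≠ 0 := by positivity
  have hk' : (Nat.factorial k : ℝ) ≠ 0 := by positivity
  field_simp
  ring_nf
  simp [pow_mul', mul_comm]


/-- Theorem (general list version). Let `P ∈ ℝ[x₁,…,xₙ]` have total degree `m` and let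
`f : {1,…,n} → ℕ⁺` satisfy `∑ f(i) = m + n`.  If the signed sum over the non-zeros of `P` in the
box `{0,…,f(1)-1} × ⋯ × {0,…,f(n)-1}` of `(-1)^{∑ zᵢ} ∏ C(f(i)-1, zᵢ) P(z)` is non-zero, then for
all `S₁,…,Sₙ ⊆ ℝ` with `|Sᵢ| ≥ f(i)` there is `(s₁,…,sₙ) ∈ S₁ × ⋯ × Sₙ` with `P(s) ≠ 0`. -/
theorem nonvanishing_of_signed_sum (n m : ℕ) (P : MvPolynomial (Fin n) ℝ)
    (hm : P.totalDegree = m) (f : Fin n → ℕ) (hf : ∀ i, 1 ≤ f i)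
    (hsum : ∑ i, f i = m + n)
    (hNZ : ∑ z ∈ (Fintype.piFinset fun i => Finset.range (f i)).filter
          (fun z => MvPolynomial.eval (fun i => (z i : ℝ)) P ≠ 0),
        (-1 : ℝ) ^ (∑ i, z i) * (∏ i, ((f i - 1).choose (z i) : ℝ)) *
          MvPolynomial.eval (fun i => (z i : ℝ)) P ≠ 0) :
    ∀ S : Fin n → Finset ℝ, (∀ i, f i ≤ (S i).card) →
      ∃ s : Fin n → ℝ, (∀ i, s i ∈ S i) ∧ MvPolynomial.eval s P ≠ 0 := by
  intro S hcard
  have hsum1 : ∑ i, (f i - 1) = m := by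
    have h : ∑ i, (f i - 1) + ∑ _i : Fin n, 1 = ∑ i, f i := by
      rw [← Finset.sum_add_distrib]
      exact Finset.sum_congr rfl fun i _ => by have := hf i; omega
    simp only [Finset.sum_const, Finset.card_univ, Fintype.card_fin, smul_eq_mul, mul_one] at h
    omega
  set c : ℝ := ∏ i, ((-1 : ℝ) ^ (f i - 1) / (Nat.factorial (f i - 1) : ℝ)) with hc
  have hcne : c ≠ 0 := by
    rw [hc]
    refine Finset.prod_ne_zero_iff.mpr fun i _ => ?_
    have h1 : ((-1 : ℝ)) ^ (f i - 1) ≠ 0 := pow_ne_zero _ (by norm_num)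
    have h2 : (Nat.factorial (f i - 1) : ℝ) ≠ 0 := by positivity
    exact div_ne_zero h1 h2
  -- Step A: the coefficient of the top monomial is nonzero
  have hcoeff : MvPolynomial.coeff (Finsupp.equivFunOnFinite.symm fun i => f i - 1) P ≠ 0 := by
    have hGcard : ∀ i, ((range (f i)).image (Nat.cast : ℕ → ℝ)).card = f i := fun i => by
      rw [Finset.card_image_of_injective _ Nat.cast_injective, Finset.card_range]
    have hdegG : P.totalDegree ≤ ∑ i, (((range (f i)).image (Nat.cast : ℕ → ℝ)).card - 1) := by
      rw [Finset.sum_congr rfl fun i _ => by rw [hGcard i], hsum1, hm]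
    have hid := grid_identity n P (fun i => (range (f i)).image (Nat.cast : ℕ → ℝ)) hdegG
      (fun i => by rw [hGcard i]; exact hf i)
    have htarg : (Finsupp.equivFunOnFinite.symm fun i =>
          ((range (f i)).image (Nat.cast : ℕ → ℝ)).card - 1)
        = (Finsupp.equivFunOnFinite.symm fun i => f i - 1) := by
      congr 1; funext i; rw [hGcard i]
    rw [htarg] at hid
    rw [← hid]
    -- transform the grid sum into the integer-point sum
    have hpi : Fintype.piFinset (fun i => (range (f i)).image (Nat.cast : ℕ → ℝ))
        = (Fintype.piFinset fun i => range (f i)).image (fun z i => ((z i : ℕ) : ℝ)) :=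
      Fintype.piFinset_image _ _
    have hinj : ∀ x ∈ Fintype.piFinset fun i => range (f i),
        ∀ y ∈ Fintype.piFinset fun i => range (f i),
        (fun i => ((x i : ℕ) : ℝ)) = (fun i => ((y i : ℕ) : ℝ)) → x = y := by
      intro x _ y _ h
      funext i
      exact Nat.cast_injective (congrFun h i)
    rw [hpi, Finset.sum_image hinj]
    have hW : ∀ z ∈ Fintype.piFinset fun i => range (f i),
        (∏ i, ∏ t ∈ (((range (f i)).image (Nat.cast : ℕ → ℝ))).erase ((z i : ℝ)), ((z i : ℝ) - t)⁻¹)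
          = c * ((-1 : ℝ) ^ (∑ i, z i) * ∏ i, ((f i - 1).choose (z i) : ℝ)) := by
      intro z hz
      have h1 : ∀ i, (∏ t ∈ (((range (f i)).image (Nat.cast : ℕ → ℝ))).erase ((z i : ℝ)), ((z i : ℝ) - t)⁻¹)
          = ((-1 : ℝ) ^ (f i - 1) / (Nat.factorial (f i - 1) : ℝ))
              * ((-1 : ℝ) ^ (z i) * ((f i - 1).choose (z i) : ℝ)) := by
        intro i
        have hzi : z i ≤ f i - 1 := by
          have h := Fintype.mem_piFinset.mp hz i
          rw [Finset.mem_range] at h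
          have := hf i
          omega
        have hfi : f i = (f i - 1) + 1 := by have := hf i; omega
        have hw := weight_eq (f i - 1) (z i) hzi
        rw [show range (f i) = range ((f i - 1) + 1) from by rw [← hfi], hw]
        ring
      rw [Finset.prod_congr rfl fun i _ => h1 i, Finset.prod_mul_distrib,
        Finset.prod_mul_distrib, Finset.prod_pow_eq_pow_sum]
    rw [Finset.sum_congr rfl fun z hz => by rw [hW z hz]]
    have : ∑ z ∈ Fintype.piFinset fun i => range (f i),
        (c * ((-1 : ℝ) ^ (∑ i, z i) * ∏ i, ((f i - 1).choose (z i) : ℝ)))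
          * MvPolynomial.eval (fun i => (z i : ℝ)) P
        = c * ∑ z ∈ Fintype.piFinset fun i => range (f i),
            (-1 : ℝ) ^ (∑ i, z i) * (∏ i, ((f i - 1).choose (z i) : ℝ))
              * MvPolynomial.eval (fun i => (z i : ℝ)) P := by
      rw [Finset.mul_sum]
      exact Finset.sum_congr rfl fun z _ => by ring
    rw [this]
    refine mul_ne_zero hcne ?_
    rw [← Finset.sum_filter_of_ne (p := fun z => MvPolynomial.eval (fun i => (z i : ℝ)) P ≠ 0)
      (by intro z _ hne h0; exact hne (by rw [h0, mul_zero]))]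
    exact hNZ
  -- Step B: apply the grid identity to subsets of the given S
  choose S' hsub hS'card using fun i => Finset.exists_subset_card_eq (s := S i) (n := f i) (hcard i)
  have hdeg' : P.totalDegree ≤ ∑ i, ((S' i).card - 1) := by
    rw [Finset.sum_congr rfl fun i _ => by rw [hS'card i], hsum1, hm]
  have hid2 := grid_identity n P S' hdeg' (fun i => by rw [hS'card i]; exact hf i)
  have htarg2 : (Finsupp.equivFunOnFinite.symm fun i => (S' i).card - 1)
      = (Finsupp.equivFunOnFinite.symm fun i => f i - 1) := by
    congr 1; funext i; rw [hS'card i]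
  rw [htarg2] at hid2
  have hsumne : ∑ s ∈ Fintype.piFinset S',
      (∏ i, ∏ t ∈ (S' i).erase (s i), (s i - t)⁻¹) * MvPolynomial.eval s P ≠ 0 := by
    rw [hid2]; exact hcoeff
  obtain ⟨s, hs, hterm⟩ := Finset.exists_ne_zero_of_sum_ne_zero hsumne
  exact ⟨s, fun i => hsub i (Fintype.mem_piFinset.mp hs i),
    fun h => hterm (by rw [h, mul_zero])⟩
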